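/- Let d ≥ 2, r > 0, and let K, L ⊆ ℝ^d be nonempty compact sets. Then the Lebesgue measure of the Minkowski sum of the r-parallel sets K_{⊕r} and L_{⊕r} satisfies λ(K_{⊕r} ⊕ L_{⊕r}) ≤ λ(K_{⊕r}) · λ(L_{⊕r}) · 2^{4d} / (ω_d r^d). -/

import Mathlib

open MeasureTheory Set Filter
open scoped ENNReal Pointwise

/-- The closed unit Euclidean ball in `ℝ^d`. -/
noncomputable def unitBall (d : ℕ) : Set (EuclideanSpace ℝ (Fin d)) := Metric.closedBall 0 1

/-- `ω_d = π^{d/2}/Γ(1+d/2)`, the volume of the unit Euclidean ball in `ℝ^d`. -/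
noncomputable def omegaVol (d : ℕ) : ℝ := Real.pi ^ ((d : ℝ) / 2) / Real.Gamma (1 + (d : ℝ) / 2)

lemma omegaVol_pos (d : ℕ) : 0 < omegaVol d := by
  apply div_pos
  · exact Real.rpow_pos_of_pos Real.pi_pos _
  · exact Real.Gamma_pos_of_pos (by positivity)

lemma volume_ball_eq (d : ℕ) (hd : 1 ≤ d) (x : EuclideanSpace ℝ (Fin d)) {ρ : ℝ} (hρ : 0 ≤ ρ) :
    volume (Metric.ball x ρ) = ENNReal.ofReal (ρ ^ d * omegaVol d) := by
  haveI : Nonempty (Fin d) := Fin.pos_iff_nonempty.mp (by omega)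
  rw [EuclideanSpace.volume_ball (Fin d) x ρ]
  have h1 : Real.sqrt Real.pi ^ d = Real.pi ^ ((d : ℝ) / 2) := by
    rw [Real.sqrt_eq_rpow, ← Real.rpow_natCast (Real.pi ^ ((1:ℝ)/2)) d,
      ← Real.rpow_mul Real.pi_pos.le]
    ring_nf
  have h2 : (Fintype.card (Fin d) : ℝ) / 2 + 1 = 1 + (d : ℝ) / 2 := by
    simp [add_comm]
  rw [Fintype.card_fin] at *
  rw [← ENNReal.ofReal_pow hρ, ← ENNReal.ofReal_mul (by positivity), h1]
  congr 2
  unfold omegaVol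
  rw [h2]

lemma volume_closedBall_eq (d : ℕ) (hd : 1 ≤ d) (x : EuclideanSpace ℝ (Fin d)) {ρ : ℝ}
    (hρ : 0 ≤ ρ) :
    volume (Metric.closedBall x ρ) = ENNReal.ofReal (ρ ^ d * omegaVol d) := by
  haveI : Nonempty (Fin d) := Fin.pos_iff_nonempty.mp (by omega)
  rw [MeasureTheory.Measure.addHaar_closedBall_eq_addHaar_ball, volume_ball_eq d hd x hρ]

/-- Existence of a maximal `r`-separated subset of a compact set, which is then an `r`-net. -/
lemma exists_net (d : ℕ) (hd : 1 ≤ d) (r : ℝ) (hr : 0 < r)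
    (K : Set (EuclideanSpace ℝ (Fin d))) (hK : IsCompact K) :
    ∃ S : Finset (EuclideanSpace ℝ (Fin d)), ↑S ⊆ K ∧
      (∀ x ∈ S, ∀ y ∈ S, x ≠ y → r ≤ dist x y) ∧
      K ⊆ ⋃ x ∈ S, Metric.ball x r := by
  classical
  set P : Finset (EuclideanSpace ℝ (Fin d)) → Prop := fun S =>
    ↑S ⊆ K ∧ ∀ x ∈ S, ∀ y ∈ S, x ≠ y → r ≤ dist x y with hP
  -- bound on cardinality of separated sets
  obtain ⟨R, hR⟩ := hK.isBounded.subset_closedBall 0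
  have hv : volume (Metric.ball (0 : EuclideanSpace ℝ (Fin d)) (r/2)) = ENNReal.ofReal ((r/2) ^ d * omegaVol d) :=
    volume_ball_eq d hd 0 (by positivity)
  set v : ℝ≥0∞ := ENNReal.ofReal ((r/2) ^ d * omegaVol d) with hvdef
  have hv0 : v ≠ 0 := by
    rw [hvdef]
    simp only [ne_eq, ENNReal.ofReal_eq_zero, not_le]
    have := omegaVol_pos d
    positivity
  set V : ℝ≥0∞ := volume (Metric.closedBall (0 : EuclideanSpace ℝ (Fin d)) (R + r)) with hVdef
  have hVfin : V ≠ ∞ := by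
    have hle : V ≤ ENNReal.ofReal (|R + r| ^ d * omegaVol d) := by
      rw [hVdef, ← volume_closedBall_eq d hd 0 (abs_nonneg (R + r))]
      exact measure_mono (Metric.closedBall_subset_closedBall (le_abs_self _))
    exact ne_top_of_le_ne_top ENNReal.ofReal_ne_top hle
  have key : ∀ S : Finset (EuclideanSpace ℝ (Fin d)), P S → (S.card : ℝ≥0∞) * v ≤ V := by
    intro S hS
    have hdisj : (↑S : Set (EuclideanSpace ℝ (Fin d))).PairwiseDisjoint (fun x => Metric.ball x (r/2)) := by
      intro x hx y hy hxy
      exact Metric.ball_disjoint_ball (by linarith [hS.2 x hx y hy hxy])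
    have hsub : (⋃ x ∈ S, Metric.ball x (r/2)) ⊆ Metric.closedBall (0 : EuclideanSpace ℝ (Fin d)) (R + r) := by
      intro z hz
      simp only [Set.mem_iUnion] at hz
      obtain ⟨x, hx, hzx⟩ := hz
      have h1 : dist x (0:EuclideanSpace ℝ (Fin d)) ≤ R := hR (hS.1 hx)
      have h2 : dist z x < r / 2 := hzx
      calc dist z (0:EuclideanSpace ℝ (Fin d)) ≤ dist z x + dist x 0 := dist_triangle _ _ _
        _ ≤ R + r := by linarith
    calc (S.card : ℝ≥0∞) * v = ∑ x ∈ S, volume (Metric.ball x (r/2)) := by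
          rw [Finset.sum_congr rfl (fun x _ => volume_ball_eq d hd x (by positivity)),
            Finset.sum_const, nsmul_eq_mul, hvdef]
      _ = volume (⋃ x ∈ S, Metric.ball x (r/2)) :=
          (measure_biUnion_finset hdisj (fun x _ => measurableSet_ball)).symm
      _ ≤ V := measure_mono hsub
  have cardbound : ∀ S : Finset (EuclideanSpace ℝ (Fin d)), P S → S.card ≤ ⌈(V / v).toReal⌉₊ := by
    intro S hS
    have h1 : (S.card : ℝ≥0∞) ≤ V / v :=
      (ENNReal.le_div_iff_mul_le (Or.inl hv0) (Or.inr hVfin)).mpr (key S hS)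
    have h2 : (S.card : ℝ) ≤ (V / v).toReal := by
      have := ENNReal.toReal_mono (by simp [ENNReal.div_eq_top, hv0, hVfin]) h1
      simpa using this
    exact_mod_cast h2.trans (Nat.le_ceil _)
  -- choose maximal cardinality
  set C : Set ℕ := {n | ∃ S : Finset (EuclideanSpace ℝ (Fin d)), P S ∧ S.card = n} with hC
  have hCne : C.Nonempty := ⟨0, ∅, ⟨by simp, by simp⟩, rfl⟩
  have hCbdd : BddAbove C := by
    refine ⟨⌈(V / v).toReal⌉₊, fun n hn => ?_⟩
    obtain ⟨S, hS, rfl⟩ := hn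
    exact cardbound S hS
  obtain ⟨S, hSP, hScard⟩ := Nat.sSup_mem hCne hCbdd
  refine ⟨S, hSP.1, hSP.2, ?_⟩
  intro y hy
  by_contra hcov
  simp only [Set.mem_iUnion, Metric.mem_ball, not_exists] at hcov
  have hsep : ∀ x ∈ S, r ≤ dist y x := by
    intro x hx
    by_contra h
    exact hcov x hx (lt_of_not_ge h)
  have hyS : y ∉ S := by
    intro h
    have := hsep y h
    simp at this
    linarith
  have hP' : P (insert y S) := by
    constructor
    · intro z hz
      simp only [Finset.coe_insert, Set.mem_insert_iff] at hz
      rcases hz with rfl | hz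
      · exact hy
      · exact hSP.1 hz
    · intro a ha b hb hab
      simp only [Finset.mem_insert] at ha hb
      rcases ha with rfl | ha <;> rcases hb with rfl | hb
      · exact absurd rfl hab
      · exact hsep b hb
      · rw [dist_comm]; exact hsep a ha
      · exact hSP.2 a ha b hb hab
  have : (insert y S).card ≤ sSup C := le_csSup hCbdd ⟨insert y S, hP', rfl⟩
  rw [Finset.card_insert_of_notMem hyS, hScard] at this
  omega

/-- **reverse Brunn–Minkowski for parallel sets.** For `d ≥ 2`, `r > 0`
and nonempty compact `K, L ⊆ ℝ^d`,
`λ(K_{⊕r} ⊕ L_{⊕r}) ≤ λ(K_{⊕r}) · λ(L_{⊕r}) · 2^{4d}/(ω_d r^d)`. -/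
theorem reverse_brunn_minkowski_parallel_sets
    (d : ℕ) (hd : 2 ≤ d) (r : ℝ) (hr : 0 < r)
    (K L : Set (EuclideanSpace ℝ (Fin d)))
    (hK : IsCompact K) (hKne : K.Nonempty) (hL : IsCompact L) (hLne : L.Nonempty) :
    volume ((K + r • unitBall d) + (L + r • unitBall d)) ≤
      volume (K + r • unitBall d) * volume (L + r • unitBall d) *
        ENNReal.ofReal (2 ^ (4 * d) / (omegaVol d * r ^ d)) := by
  classical
  have hd1 : 1 ≤ d := by omega
  have hball : r • unitBall d = Metric.closedBall (0 : EuclideanSpace ℝ (Fin d)) r := by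
    rw [unitBall, smul_closedBall _ _ zero_le_one]
    simp [Real.norm_of_nonneg hr.le]
  -- membership description of parallel sets
  have hmem : ∀ (A : Set (EuclideanSpace ℝ (Fin d))) (x : EuclideanSpace ℝ (Fin d)), x ∈ A + r • unitBall d ↔ ∃ a ∈ A, dist x a ≤ r := by
    intro A x
    rw [hball]
    constructor
    · rintro ⟨a, ha, z, hz, rfl⟩
      refine ⟨a, ha, ?_⟩
      rw [Metric.mem_closedBall, dist_zero_right] at hz
      rw [dist_eq_norm]
      simpa using hz
    · rintro ⟨a, ha, hxa⟩
      refine ⟨a, ha, x - a, ?_, by module⟩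
      rw [Metric.mem_closedBall, dist_zero_right, ← dist_eq_norm]
      exact hxa
  obtain ⟨S, hSK, hSsep, hScov⟩ := exists_net d hd1 r hr K hK
  obtain ⟨T, hTL, hTsep, hTcov⟩ := exists_net d hd1 r hr L hL
  set v : ℝ≥0∞ := ENNReal.ofReal ((r/2) ^ d * omegaVol d) with hvdef
  -- lower bound on volume of parallel sets
  have lower : ∀ (A : Set (EuclideanSpace ℝ (Fin d))) (U : Finset (EuclideanSpace ℝ (Fin d))), ↑U ⊆ A →
      (∀ x ∈ U, ∀ y ∈ U, x ≠ y → r ≤ dist x y) →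
      (U.card : ℝ≥0∞) * v ≤ volume (A + r • unitBall d) := by
    intro A U hUA hUsep
    have hdisj : (↑U : Set (EuclideanSpace ℝ (Fin d))).PairwiseDisjoint (fun x => Metric.ball x (r/2)) := by
      intro x hx y hy hxy
      exact Metric.ball_disjoint_ball (by linarith [hUsep x hx y hy hxy])
    have hsub : (⋃ x ∈ U, Metric.ball x (r/2)) ⊆ A + r • unitBall d := by
      intro z hz
      simp only [Set.mem_iUnion] at hz
      obtain ⟨x, hx, hzx⟩ := hz
      rw [hmem]
      exact ⟨x, hUA hx, le_trans (le_of_lt hzx) (by linarith)⟩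
    calc (U.card : ℝ≥0∞) * v = ∑ x ∈ U, volume (Metric.ball x (r/2)) := by
          rw [Finset.sum_congr rfl (fun x _ => volume_ball_eq d hd1 x (by positivity)),
            Finset.sum_const, nsmul_eq_mul, hvdef]
      _ = volume (⋃ x ∈ U, Metric.ball x (r/2)) :=
          (measure_biUnion_finset hdisj (fun x _ => measurableSet_ball)).symm
      _ ≤ volume (A + r • unitBall d) := measure_mono hsub
  have hKlow := lower K S hSK hSsep
  have hLlow := lower L T hTL hTsep
  -- covering of the Minkowski sum
  have hcov : (K + r • unitBall d) + (L + r • unitBall d) ⊆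
      ⋃ x ∈ S, ⋃ y ∈ T, Metric.closedBall (x + y) (4 * r) := by
    rintro z ⟨p, hp, q, hq, rfl⟩
    obtain ⟨k, hk, hpk⟩ := (hmem K p).mp hp
    obtain ⟨l, hl, hql⟩ := (hmem L q).mp hq
    obtain ⟨x, hx, hkx⟩ : ∃ x ∈ S, dist k x < r := by
      have := hScov hk
      simpa using this
    obtain ⟨y, hy, hly⟩ : ∃ y ∈ T, dist l y < r := by
      have := hTcov hl
      simpa using this
    simp only [Set.mem_iUnion, Metric.mem_closedBall]
    refine ⟨x, hx, y, hy, ?_⟩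
    calc dist (p + q) (x + y) ≤ dist p x + dist q y := dist_add_add_le _ _ _ _
      _ ≤ (dist p k + dist k x) + (dist q l + dist l y) :=
          add_le_add (dist_triangle _ _ _) (dist_triangle _ _ _)
      _ ≤ 4 * r := by linarith
  set W : ℝ≥0∞ := ENNReal.ofReal ((4 * r) ^ d * omegaVol d) with hWdef
  have hub : volume ((K + r • unitBall d) + (L + r • unitBall d)) ≤
      (S.card : ℝ≥0∞) * (T.card : ℝ≥0∞) * W := by
    calc volume ((K + r • unitBall d) + (L + r • unitBall d))
        ≤ volume (⋃ x ∈ S, ⋃ y ∈ T, Metric.closedBall (x + y) (4 * r)) := measure_mono hcov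
      _ ≤ ∑ x ∈ S, volume (⋃ y ∈ T, Metric.closedBall (x + y) (4 * r)) :=
          measure_biUnion_finset_le _ _
      _ ≤ ∑ x ∈ S, ∑ y ∈ T, volume (Metric.closedBall (x + y) (4 * r)) :=
          Finset.sum_le_sum (fun x _ => measure_biUnion_finset_le _ _)
      _ = (S.card : ℝ≥0∞) * (T.card : ℝ≥0∞) * W := by
          rw [Finset.sum_congr rfl (fun x _ => Finset.sum_congr rfl
            (fun y _ => volume_closedBall_eq d hd1 (x + y) (by positivity)))]
          simp [mul_assoc, hWdef]
  -- the key constant identity : W = c * v * v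
  have hω := omegaVol_pos d
  have hc : W = ENNReal.ofReal (2 ^ (4 * d) / (omegaVol d * r ^ d)) * v * v := by
    rw [hWdef, hvdef, ← ENNReal.ofReal_mul (by positivity), ← ENNReal.ofReal_mul (by positivity)]
    congr 1
    have h2 : (0:ℝ) < omegaVol d * r ^ d := by positivity
    have h4 : (4:ℝ) ^ d = 2 ^ (2 * d) := by
      rw [show (4:ℝ) = 2 ^ 2 by norm_num, ← pow_mul]
    have h24 : (2:ℝ) ^ (4 * d) = 2 ^ (2 * d) * (2 ^ d * 2 ^ d) := by
      rw [← pow_add, ← pow_add]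
      congr 1
      ring
    simp only [mul_pow, div_pow]
    rw [h4, h24]
    have hne : ((2:ℝ) ^ d) ≠ 0 := by positivity
    have hrd : (r:ℝ) ^ d ≠ 0 := by positivity
    field_simp
  calc volume ((K + r • unitBall d) + (L + r • unitBall d))
      ≤ (S.card : ℝ≥0∞) * (T.card : ℝ≥0∞) * W := hub
    _ = ((S.card : ℝ≥0∞) * v) * ((T.card : ℝ≥0∞) * v) *
          ENNReal.ofReal (2 ^ (4 * d) / (omegaVol d * r ^ d)) := by
        rw [hc]; ring
    _ ≤ volume (K + r • unitBall d) * volume (L + r • unitBall d) *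
          ENNReal.ofReal (2 ^ (4 * d) / (omegaVol d * r ^ d)) := by
        exact mul_le_mul' (mul_le_mul' hKlow hLlow) le_rfl
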